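/- For 0 < q < 1, a ∈ ℝ, n ∈ ℕ, one has the q-binomial identity Σ_{p=0}^{n} q^{−2p(a+n)} · (q^{2n}; q^{-2})_p / ((−1)^p (q^{-2}; q^{-2})_p) · q^{n−2p} = (q^{a+n} + q^{−a−n})/(q^a + q^{−a}) · (−q^{−2a}; q^{-2})_n, expressing that ⟨ξ⁺, K ξ⁺⟩/‖ξ⁺‖² = (q^{a+n}+q^{−a−n})/(q^a+q^{−a}) for the eigenvector ξ⁺ and K acting diagonally by q^{n−2p}. -/

import Mathlib

/-- q-Pochhammer symbol (x; r)_p = ∏_{j=0}^{p-1} (1 - r^j x). -/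
def qPoch (x r : ℝ) (p : ℕ) : ℝ := ∏ j ∈ Finset.range p, (1 - r ^ j * x)

noncomputable def cc (q : ℝ) (n p : ℕ) : ℝ :=
  qPoch (q ^ (2 * n)) ((q ^ 2)⁻¹) p / ((-1 : ℝ) ^ p * qPoch ((q ^ 2)⁻¹) ((q ^ 2)⁻¹) p)

lemma qPoch_succ (x r : ℝ) (p : ℕ) : qPoch x r (p+1) = qPoch x r p * (1 - r^p * x) :=
  Finset.prod_range_succ _ _

lemma qPoch_zero (x r : ℝ) : qPoch x r 0 = 1 := rfl

lemma denom_ne (q : ℝ) (hq0 : 0 < q) (hq1 : q < 1) (p : ℕ) :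
    qPoch ((q^2)⁻¹) ((q^2)⁻¹) p ≠ 0 := by
  unfold qPoch
  apply Finset.prod_ne_zero_iff.mpr
  intro j _
  have h2' : 0 < q^2 := by positivity
  have h1 : (1:ℝ) < (q^2)⁻¹ := by
    rw [one_lt_inv_iff₀]; constructor; exact h2'; nlinarith
  have : (1:ℝ) < ((q^2)⁻¹)^(j+1) := one_lt_pow₀ h1 (Nat.succ_ne_zero j)
  have e : ((q^2)⁻¹)^j * (q^2)⁻¹ = ((q^2)⁻¹)^(j+1) := by ring
  rw [e]; linarith

lemma cc_zero (q : ℝ) (n : ℕ) : cc q n 0 = 1 := by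
  simp [cc, qPoch_zero]

lemma cc_top (q : ℝ) (hq0 : 0 < q) (n : ℕ) : cc q n (n+1) = 0 := by
  have : qPoch (q ^ (2 * n)) ((q ^ 2)⁻¹) (n+1) = 0 := by
    unfold qPoch
    apply Finset.prod_eq_zero (Finset.self_mem_range_succ n)
    have hq : q ≠ 0 := ne_of_gt hq0
    field_simp
    rw [one_div, inv_pow, ← pow_mul, inv_mul_cancel₀ (pow_ne_zero _ hq), sub_self]
  simp [cc, this]

lemma cc_pascal (q : ℝ) (hq0 : 0 < q) (hq1 : q < 1) (n p : ℕ) :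
    cc q (n+1) (p+1) = cc q n (p+1) + q^(2*n+2) * cc q n p := by
  have hq : q ≠ 0 := ne_of_gt hq0
  have hD := denom_ne q hq0 hq1 p
  have hdfac : (1 : ℝ) - ((q^2)⁻¹)^p * (q^2)⁻¹ ≠ 0 := by
    have := denom_ne q hq0 hq1 (p+1)
    rw [qPoch_succ] at this
    exact right_ne_zero_of_mul this
  have hq2 : (q:ℝ)^2 ≠ 0 := by positivity
  have hs : ((-1:ℝ))^p ≠ 0 := pow_ne_zero _ (by norm_num)
  have hnum : qPoch (q ^ (2 * (n+1))) ((q ^ 2)⁻¹) (p+1)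
      = (1 - q^(2*n+2)) * qPoch (q ^ (2 * n)) ((q ^ 2)⁻¹) p := by
    unfold qPoch
    rw [Finset.prod_range_succ']
    have h : ∀ j, (1 - ((q^2)⁻¹)^(j+1) * q^(2*(n+1))) = (1 - ((q^2)⁻¹)^j * q^(2*n)) := by
      intro j; field_simp
      have hqq : q^2 * q⁻¹^2 = 1 := by rw [← mul_pow, mul_inv_cancel₀ hq, one_pow]
      linear_combination (-(q^(n*2)) * q⁻¹^(j*2)) * hqq
    rw [Finset.prod_congr rfl (fun j _ => h j), pow_zero, one_mul]
    ring
  have hr : (q^2)⁻¹ * q^2 = 1 := inv_mul_cancel₀ hq2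
  unfold cc
  rw [hnum, qPoch_succ, qPoch_succ, pow_succ]
  generalize hRR : ((q:ℝ)^2)⁻¹ = r at hr hD hdfac ⊢
  field_simp
  linear_combination (qPoch (q^(2*n)) r p * (qPoch r r p)^2 * (-1)^(p*2) *
    q^(2*n) * r^p * (1 - r^(p+1))
    + (-(q^(n*2)) * qPoch (q^(2*n)) r p * (qPoch r r p)^2 * r^p * (-1)^(p*2)
      + q^(n*2) * qPoch (q^(2*n)) r p * (qPoch r r p)^2 * r * r^(p*2) * (-1)^(p*2)
      - q^(n*2) * qPoch (q^(2*n)) r p * r^p * (-1)^p)) * hr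

lemma gauss (q : ℝ) (hq0 : 0 < q) (hq1 : q < 1) :
    ∀ (n : ℕ) (w : ℝ), ∑ p ∈ Finset.range (n+1), cc q n p * w^p
      = ∏ j ∈ Finset.range n, (1 + q^(2*j+2) * w) := by
  intro n
  induction n with
  | zero => intro w; simp [cc_zero]
  | succ n ih =>
    intro w
    rw [Finset.prod_range_succ, ← ih w]
    rw [Finset.sum_range_succ' (fun p => cc q (n+1) p * w^p) (n+1)]
    have h1 : ∀ p ∈ Finset.range (n+1), cc q (n+1) (p+1) * w^(p+1)
        = cc q n (p+1) * w^(p+1) + q^(2*n+2) * w * (cc q n p * w^p) := by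
      intro p _; rw [cc_pascal q hq0 hq1]; ring
    rw [Finset.sum_congr rfl h1, Finset.sum_add_distrib, ← Finset.mul_sum]
    have h2 : (∑ p ∈ Finset.range (n+1), cc q n (p+1) * w^(p+1)) + cc q n 0 * w^0
        = ∑ p ∈ Finset.range (n+1), cc q n p * w^p := by
      rw [← Finset.sum_range_succ' (fun p => cc q n p * w^p) (n+1),
          Finset.sum_range_succ]
      simp [cc_top q hq0 n]
    simp only [cc_zero, pow_zero, mul_one, one_mul] at h2 ⊢
    linear_combination h2

/-- The q-binomial identity
Σ_{p=0}^{n} q^{−2p(a+n)} (q^{2n}; q^{-2})_p / ((−1)^p (q^{-2}; q^{-2})_p) q^{n−2p}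
= (q^{a+n} + q^{−a−n})/(q^a + q^{−a}) · (−q^{−2a}; q^{-2})_n. -/
theorem stmt12 (q a : ℝ) (hq0 : 0 < q) (hq1 : q < 1) (n : ℕ) :
    ∑ p ∈ Finset.range (n + 1),
      q ^ (-2 * (p : ℝ) * (a + (n : ℝ))) *
        (qPoch (q ^ (2 * n)) ((q ^ 2)⁻¹) p /
          ((-1 : ℝ) ^ p * qPoch ((q ^ 2)⁻¹) ((q ^ 2)⁻¹) p)) *
        q ^ ((n : ℝ) - 2 * (p : ℝ)) =
      (q ^ (a + (n : ℝ)) + q ^ (-(a + (n : ℝ)))) / (q ^ a + q ^ (-a)) *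
        qPoch (-(q ^ (-2 * a))) ((q ^ 2)⁻¹) n := by
  have hq : q ≠ 0 := ne_of_gt hq0
  set u : ℝ := q ^ (-2 * a) with hu
  have hu0 : 0 < u := Real.rpow_pos_of_pos hq0 _
  have h1u : (1 : ℝ) + u ≠ 0 := by positivity
  set w : ℝ := u * ((q^2)⁻¹)^(n+1) with hw
  -- per-term rewrite
  have hterm : ∀ p ∈ Finset.range (n+1),
      q ^ (-2 * (p : ℝ) * (a + (n : ℝ))) *
        (qPoch (q ^ (2 * n)) ((q ^ 2)⁻¹) p /
          ((-1 : ℝ) ^ p * qPoch ((q ^ 2)⁻¹) ((q ^ 2)⁻¹) p)) *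
        q ^ ((n : ℝ) - 2 * (p : ℝ)) = q^n * (cc q n p * w^p) := by
    intro p _
    have key : q ^ (-2*(p:ℝ)*(a+(n:ℝ))) * q ^ ((n:ℝ) - 2*(p:ℝ)) = q^n * w^p := by
      rw [hw, hu]
      have h2 : ((q^2)⁻¹ : ℝ) = q ^ ((-2:ℝ)) := by
        rw [show ((-2:ℝ)) = -((2:ℕ):ℝ) by norm_num, Real.rpow_neg hq0.le, Real.rpow_natCast]
      rw [h2, ← Real.rpow_natCast (q ^ ((-2:ℝ))) (n+1), ← Real.rpow_mul hq0.le,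
        ← Real.rpow_natCast (q ^ (-2*a) * q ^ ((-2:ℝ) * ((n+1:ℕ):ℝ))) p,
        Real.mul_rpow (Real.rpow_pos_of_pos hq0 _).le (Real.rpow_pos_of_pos hq0 _).le,
        ← Real.rpow_mul hq0.le, ← Real.rpow_mul hq0.le,
        ← Real.rpow_natCast q n, ← Real.rpow_add hq0, ← Real.rpow_add hq0, ← Real.rpow_add hq0]
      congr 1
      push_cast
      ring
    rw [cc]
    rw [show q ^ (-2 * (p : ℝ) * (a + (n : ℝ))) *
        (qPoch (q ^ (2 * n)) ((q ^ 2)⁻¹) p /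
          ((-1 : ℝ) ^ p * qPoch ((q ^ 2)⁻¹) ((q ^ 2)⁻¹) p)) *
        q ^ ((n : ℝ) - 2 * (p : ℝ))
      = q ^ (-2*(p:ℝ)*(a+(n:ℝ))) * q ^ ((n:ℝ) - 2*(p:ℝ)) *
        (qPoch (q ^ (2 * n)) ((q ^ 2)⁻¹) p /
          ((-1 : ℝ) ^ p * qPoch ((q ^ 2)⁻¹) ((q ^ 2)⁻¹) p)) by ring, key]
    ring
  rw [Finset.sum_congr rfl hterm, ← Finset.mul_sum, gauss q hq0 hq1 n w]
  -- ratio rewrite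
  have hA0 : (0:ℝ) < q ^ a := Real.rpow_pos_of_pos hq0 _
  have hden : q ^ a + q ^ (-a) ≠ 0 := by
    have : (0:ℝ) < q ^ (-a) := Real.rpow_pos_of_pos hq0 _
    positivity
  have l1 : q ^ (a+(n:ℝ)) = q^a * q^n := by
    rw [Real.rpow_add hq0, Real.rpow_natCast]
  have l2 : q ^ (-(a+(n:ℝ))) = (q^a)⁻¹ * (q^n)⁻¹ := by
    rw [Real.rpow_neg hq0.le, Real.rpow_add hq0, Real.rpow_natCast, mul_inv]
  have l3 : q ^ (-a) = (q^a)⁻¹ := by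
    rw [Real.rpow_neg hq0.le]
  have l4 : u * (q^a)^2 = 1 := by
    rw [hu, sq, ← Real.rpow_add hq0, ← Real.rpow_add hq0,
      show (-2*a) + (a + a) = (0:ℝ) by ring, Real.rpow_zero]
  have ratio : (q ^ (a+(n:ℝ)) + q ^ (-(a+(n:ℝ)))) / (q ^ a + q ^ (-a))
      = (q^n + u * (q^n)⁻¹) / (1 + u) := by
    have hqa : (q:ℝ)^a ≠ 0 := ne_of_gt hA0
    have hden' : (q:ℝ)^a + (q^a)⁻¹ ≠ 0 := by positivity
    rw [l1, l2, l3, div_eq_div_iff hden' h1u]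
    have hqn : (q:ℝ)^n ≠ 0 := pow_ne_zero _ hq
    field_simp
    linear_combination (-(q^a) * (1 + q^n + q^(n*2) - q^(n*3)) + q^a * (1 + q^(n*2))
      + (q^(n*2) - 1 + q^a * q^n - q^a * q^(n*3))) * l4
  rw [ratio]
  -- final product identity
  have g0 : qPoch (-u) ((q ^ 2)⁻¹) n = ∏ j ∈ Finset.range n, (1 + ((q^2)⁻¹)^j * u) := by
    unfold qPoch
    exact Finset.prod_congr rfl (fun j _ => by ring)
  rw [g0, div_mul_eq_mul_div, eq_div_iff h1u]
  have hfac : ∀ j ∈ Finset.range n, (1 + q^(2*j+2) * w) = 1 + ((q^2)⁻¹)^(n-j) * u := by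
    intro j hj
    have hjn : j < n := Finset.mem_range.mp hj
    rw [hw]
    have e1 : ((q:ℝ)^2)⁻¹^(n+1) = ((q^2)⁻¹)^(n-j) * ((q^2)⁻¹)^(j+1) := by
      rw [← pow_add]; congr 1; omega
    have e2 : (q:ℝ)^(2*j+2) * ((q^2)⁻¹)^(j+1) = 1 := by
      rw [show (q:ℝ)^(2*j+2) = (q^2)^(j+1) by ring, inv_pow,
        mul_inv_cancel₀ (by positivity)]
    rw [e1]
    linear_combination (u * ((q^2)⁻¹)^(n-j)) * e2
  rw [Finset.prod_congr rfl hfac]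
  have hrefl : ∏ j ∈ Finset.range n, (1 + ((q^2)⁻¹)^(n-j) * u)
      = ∏ j ∈ Finset.range n, (1 + ((q^2)⁻¹)^(j+1) * u) := by
    rw [← Finset.prod_range_reflect (fun j => 1 + ((q^2)⁻¹)^(j+1) * u) n]
    apply Finset.prod_congr rfl
    intro j hj
    have hjn : j < n := Finset.mem_range.mp hj
    have e : n - 1 - j + 1 = n - j := by omega
    rw [e]
  rw [hrefl]
  have key2 : (∏ j ∈ Finset.range n, (1 + ((q^2)⁻¹)^(j+1) * u)) * (1 + u)
      = (∏ j ∈ Finset.range n, (1 + ((q^2)⁻¹)^j * u)) * (1 + ((q^2)⁻¹)^n * u) := by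
    rw [← Finset.prod_range_succ (fun j => 1 + ((q^2)⁻¹)^j * u) n,
      Finset.prod_range_succ' (fun j => 1 + ((q^2)⁻¹)^j * u) n]
    simp
  have key3 : (q:ℝ)^n * (1 + ((q^2)⁻¹)^n * u) = q^n + u * (q^n)⁻¹ := by
    have hqn : (q:ℝ)^n ≠ 0 := pow_ne_zero _ hq
    field_simp [inv_pow]
    have hx : (q^n)^2 * (1/q^2)^n = 1 := by
      rw [one_div, inv_pow, ← pow_mul, ← pow_mul, mul_comm n 2, mul_inv_cancel₀ (pow_ne_zero _ hq)]
    linear_combination u * hx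
  calc q^n * (∏ j ∈ Finset.range n, (1 + ((q^2)⁻¹)^(j+1) * u)) * (1 + u)
      = q^n * ((∏ j ∈ Finset.range n, (1 + ((q^2)⁻¹)^(j+1) * u)) * (1 + u)) := by ring
    _ = q^n * ((∏ j ∈ Finset.range n, (1 + ((q^2)⁻¹)^j * u)) * (1 + ((q^2)⁻¹)^n * u)) := by
        rw [key2]
    _ = (q^n + u * (q^n)⁻¹) * ∏ j ∈ Finset.range n, (1 + ((q^2)⁻¹)^j * u) := by
        rw [← key3]; ring
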